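/- Let (X, E) be a connected non-oriented graph with bounded geometry (sup_x deg(x) < ∞) and let P be the simple random walk on X, i.e. p(x,y) = 1/deg(x) if (x,y) ∈ E and 0 otherwise. If the balls grow subexponentially at some vertex x, i.e. |B_n(x)|^{1/n} → 1 as n → ∞, then limsup_{n→∞} (p^{(n)}(x,x))^{1/n} = 1; equivalently, the convergence parameter satisfies R_P = 1, so the strong and weak survival critical parameters of the branching random walk on (X,P) coincide: λ_s = λ_w = 1. -/

import Mathlib

open Filter MeasureTheory ProbabilityTheory
open scoped ENNReal NNReal

/-- `n`-step weights (matrix powers) of a weight kernel `μ` on a countable set. -/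
noncomputable def matPow {X : Type*} [DecidableEq X] (μ : X → X → ℝ≥0∞) :
    ℕ → X → X → ℝ≥0∞
  | 0, x, y => if x = y then 1 else 0
  | n + 1, x, y => ∑' z, matPow μ n x z * μ z y

/-- `(X, μ)` has bounded row sums. -/
def bddRows {X : Type*} (μ : X → X → ℝ≥0∞) : Prop :=
  ∃ K : ℝ≥0∞, K ≠ ⊤ ∧ ∀ x, ∑' y, μ x y ≤ K

/-- `(X, μ)` is connected. -/
def connectedW {X : Type*} [DecidableEq X] (μ : X → X → ℝ≥0∞) : Prop :=
  ∀ x y, ∃ n, 0 < n ∧ 0 < matPow μ n x y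

/-- `limsup_n (μ^{(n)}(x,y))^{1/n}`, the reciprocal of the convergence parameter. -/
noncomputable def lsRoot {X : Type*} [DecidableEq X] (μ : X → X → ℝ≥0∞) (x y : X) : ℝ≥0∞ :=
  Filter.limsup (fun n : ℕ => matPow μ n x y ^ (n : ℝ)⁻¹) Filter.atTop

/-- The convergence parameter `R = 1 / limsup_n (μ^{(n)}(x,y))^{1/n}`. -/
noncomputable def convR {X : Type*} [DecidableEq X] (μ : X → X → ℝ≥0∞) (x y : X) : ℝ≥0∞ :=
  (lsRoot μ x y)⁻¹

open Classical in
/-- Restriction of a weight kernel to a subset (extended by `0`). -/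
noncomputable def restrictW {X : Type*} (μ : X → X → ℝ≥0∞) (A : Set X) : X → X → ℝ≥0∞ :=
  fun x y => if x ∈ A ∧ y ∈ A then μ x y else 0
open Classical in
/-- The simple random walk kernel of a graph: `p(x,y) = 1/deg(x)` if `x ∼ y`, else `0`. -/
noncomputable def srwKernel {X : Type*} (G : SimpleGraph X) : X → X → ℝ≥0∞ :=
  fun x y => if G.Adj x y then ((G.neighborSet x).ncard : ℝ≥0∞)⁻¹ else 0

section Aux
variable {X : Type*} [DecidableEq X]

lemma matPow_zero (μ : X → X → ℝ≥0∞) (x y : X) :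
    matPow μ 0 x y = if x = y then 1 else 0 := rfl

lemma matPow_succ (μ : X → X → ℝ≥0∞) (n : ℕ) (x y : X) :
    matPow μ (n+1) x y = ∑' z, matPow μ n x z * μ z y := rfl

lemma matPow_one (μ : X → X → ℝ≥0∞) (x y : X) : matPow μ 1 x y = μ x y := by
  rw [matPow_succ, tsum_eq_single x]
  · rw [matPow_zero, if_pos rfl, one_mul]
  · intro z hz
    rw [matPow_zero, if_neg (fun h => hz h.symm), zero_mul]

lemma matPow_add (μ : X → X → ℝ≥0∞) (m n : ℕ) (x y : X) :
    matPow μ (m + n) x y = ∑' z, matPow μ m x z * matPow μ n z y := by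
  induction n generalizing y with
  | zero =>
    rw [Nat.add_zero, tsum_eq_single y]
    · rw [matPow_zero, if_pos rfl, mul_one]
    · intro z hz
      rw [matPow_zero, if_neg hz, mul_zero]
  | succ n ih =>
    show matPow μ ((m+n)+1) x y = _
    rw [matPow_succ]
    calc ∑' z, matPow μ (m+n) x z * μ z y
        = ∑' z, (∑' w, matPow μ m x w * matPow μ n w z) * μ z y :=
          tsum_congr fun z => by rw [ih]
      _ = ∑' z, ∑' w, matPow μ m x w * (matPow μ n w z * μ z y) := by
          refine tsum_congr fun z => ?_
          rw [← ENNReal.tsum_mul_right]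
          exact tsum_congr fun w => by ring
      _ = ∑' w, ∑' z, matPow μ m x w * (matPow μ n w z * μ z y) := ENNReal.tsum_comm
      _ = ∑' w, matPow μ m x w * matPow μ (n+1) w y := by
          refine tsum_congr fun w => ?_
          rw [ENNReal.tsum_mul_left, matPow_succ]

lemma matPow_one_add (μ : X → X → ℝ≥0∞) (n : ℕ) (x y : X) :
    matPow μ (n+1) x y = ∑' z, μ x z * matPow μ n z y := by
  have h := matPow_add μ 1 n x y
  rw [Nat.add_comm 1 n] at h
  rw [h]
  exact tsum_congr fun z => by rw [matPow_one]

lemma srw_row_sum (G : SimpleGraph X) (z : X) (hfin : (G.neighborSet z).Finite)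
    (hpos : 0 < (G.neighborSet z).ncard) :
    ∑' y, srwKernel G z y = 1 := by
  classical
  rw [tsum_eq_sum (s := hfin.toFinset)
    (fun y hy => by
      rw [Set.Finite.mem_toFinset, SimpleGraph.mem_neighborSet] at hy
      simp [srwKernel, hy])]
  have hcard : hfin.toFinset.card = (G.neighborSet z).ncard := by
    rw [Set.ncard_eq_toFinset_card _ hfin]
  have hcongr : ∑ y ∈ hfin.toFinset, srwKernel G z y
      = ∑ _y ∈ hfin.toFinset, ((G.neighborSet z).ncard : ℝ≥0∞)⁻¹ :=
    Finset.sum_congr rfl (fun y hy => by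
      rw [Set.Finite.mem_toFinset, SimpleGraph.mem_neighborSet] at hy
      simp [srwKernel, hy])
  rw [hcongr, Finset.sum_const, hcard, nsmul_eq_mul]
  exact ENNReal.mul_inv_cancel (by exact_mod_cast hpos.ne') (by simp)

lemma matPow_row_sum (μ : X → X → ℝ≥0∞) (hrow : ∀ z, ∑' y, μ z y = 1) (n : ℕ) (x : X) :
    ∑' y, matPow μ n x y = 1 := by
  induction n with
  | zero =>
    rw [tsum_eq_single x (fun y hy => by rw [matPow_zero, if_neg (fun h => hy h.symm)])]
    rw [matPow_zero, if_pos rfl]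
  | succ n ih =>
    calc ∑' y, matPow μ (n+1) x y = ∑' y, ∑' z, matPow μ n x z * μ z y :=
          tsum_congr fun y => matPow_succ μ n x y
      _ = ∑' z, ∑' y, matPow μ n x z * μ z y := ENNReal.tsum_comm
      _ = ∑' z, matPow μ n x z * ∑' y, μ z y := tsum_congr fun z => ENNReal.tsum_mul_left
      _ = ∑' z, matPow μ n x z := tsum_congr fun z => by rw [hrow z, mul_one]
      _ = 1 := ih

lemma matPow_le_one (μ : X → X → ℝ≥0∞) (hrow : ∀ z, ∑' y, μ z y = 1) (n : ℕ) (x y : X) :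
    matPow μ n x y ≤ 1 :=
  (ENNReal.le_tsum y).trans_eq (matPow_row_sum μ hrow n x)

lemma srw_rev (G : SimpleGraph X) (hdeg : ∀ z : X, 0 < (G.neighborSet z).ncard)
    (hbg : ∀ z : X, (G.neighborSet z).Finite) (x y : X) :
    ((G.neighborSet x).ncard : ℝ≥0∞) * srwKernel G x y
      = ((G.neighborSet y).ncard : ℝ≥0∞) * srwKernel G y x := by
  by_cases h : G.Adj x y
  · have h' := h.symm
    simp only [srwKernel, if_pos h, if_pos h']
    rw [ENNReal.mul_inv_cancel (by exact_mod_cast (hdeg x).ne') (by simp),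
      ENNReal.mul_inv_cancel (by exact_mod_cast (hdeg y).ne') (by simp)]
  · have h' : ¬ G.Adj y x := fun hh => h hh.symm
    simp [srwKernel, h, h']

lemma matPow_rev (G : SimpleGraph X) (hdeg : ∀ z : X, 0 < (G.neighborSet z).ncard)
    (hbg : ∀ z : X, (G.neighborSet z).Finite) (n : ℕ) (x y : X) :
    ((G.neighborSet x).ncard : ℝ≥0∞) * matPow (srwKernel G) n x y
      = ((G.neighborSet y).ncard : ℝ≥0∞) * matPow (srwKernel G) n y x := by
  induction n generalizing x y with
  | zero =>
    rcases eq_or_ne x y with rfl | h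
    · rfl
    · rw [matPow_zero, matPow_zero, if_neg h, if_neg (Ne.symm h), mul_zero, mul_zero]
  | succ n ih =>
    rw [matPow_succ, matPow_one_add]
    calc ((G.neighborSet x).ncard : ℝ≥0∞) * ∑' z, matPow (srwKernel G) n x z * srwKernel G z y
        = ∑' z, ((G.neighborSet x).ncard : ℝ≥0∞) * matPow (srwKernel G) n x z * srwKernel G z y := by
          rw [← ENNReal.tsum_mul_left]
          exact tsum_congr fun z => by ring
      _ = ∑' z, ((G.neighborSet z).ncard : ℝ≥0∞) * matPow (srwKernel G) n z x * srwKernel G z y :=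
          tsum_congr fun z => by rw [ih x z]
      _ = ∑' z, matPow (srwKernel G) n z x * (((G.neighborSet z).ncard : ℝ≥0∞) * srwKernel G z y) :=
          tsum_congr fun z => by ring
      _ = ∑' z, matPow (srwKernel G) n z x * (((G.neighborSet y).ncard : ℝ≥0∞) * srwKernel G y z) :=
          tsum_congr fun z => by rw [srw_rev G hdeg hbg z y]
      _ = ((G.neighborSet y).ncard : ℝ≥0∞) * ∑' z, srwKernel G y z * matPow (srwKernel G) n z x := by
          rw [← ENNReal.tsum_mul_left]
          exact tsum_congr fun z => by ring

lemma matPow_srw_support (G : SimpleGraph X) (hc : G.Connected) (n : ℕ) (x y : X)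
    (h : matPow (srwKernel G) n x y ≠ 0) : G.dist x y ≤ n := by
  induction n generalizing y with
  | zero =>
    rw [matPow_zero] at h
    split_ifs at h with hxy
    · subst hxy; simp [SimpleGraph.dist_self]
    · exact absurd rfl h
  | succ n ih =>
    rw [matPow_succ] at h
    have : ∃ z, matPow (srwKernel G) n x z * srwKernel G z y ≠ 0 := by
      by_contra hz
      push_neg at hz
      exact h (ENNReal.tsum_eq_zero.mpr hz)
    obtain ⟨z, hz⟩ := this
    have h1 : matPow (srwKernel G) n x z ≠ 0 := fun h0 => hz (by rw [h0, zero_mul])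
    have h2 : srwKernel G z y ≠ 0 := fun h0 => hz (by rw [h0, mul_zero])
    have hadj : G.Adj z y := by
      by_contra hadj
      exact h2 (by simp [srwKernel, hadj])
    have hd1 : G.dist z y ≤ 1 := (SimpleGraph.dist_le hadj.toWalk).trans (by simp)
    calc G.dist x y ≤ G.dist x z + G.dist z y := hc.dist_triangle
      _ ≤ n + 1 := Nat.add_le_add (ih z h1) hd1

lemma tendsto_rpow_inv_natCast_one {c : ℝ} (hc : 0 < c) :
    Tendsto (fun n : ℕ => c ^ (n : ℝ)⁻¹) atTop (nhds 1) := by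
  have h1 : Tendsto (fun n : ℕ => ((n : ℝ))⁻¹) atTop (nhds 0) :=
    tendsto_inv_atTop_zero.comp tendsto_natCast_atTop_atTop
  have h2 : Tendsto (fun n : ℕ => Real.exp (Real.log c * (n : ℝ)⁻¹)) atTop (nhds 1) := by
    have := (Real.continuous_exp.tendsto (Real.log c * 0)).comp (h1.const_mul (Real.log c))
    simpa [Function.comp_def] using this
  exact h2.congr fun n => (Real.rpow_def_of_pos hc _).symm

end Aux

/-- for the simple random walk on a connected non-oriented graph with
bounded geometry whose balls grow subexponentially at `x`, one has
`limsup_n (p^{(n)}(x,x))^{1/n} = 1`, i.e. `R_P = 1`, so `λ_s = λ_w = 1` for the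
branching random walk. -/
theorem srw_subexponential_growth_lsRoot_eq_one
    {X : Type*} [Countable X] [DecidableEq X]
    (G : SimpleGraph X) (hG : G.Connected)
    (hbg : ∃ D : ℕ, ∀ z : X, (G.neighborSet z).Finite ∧ (G.neighborSet z).ncard ≤ D)
    (hdeg : ∀ z : X, 0 < (G.neighborSet z).ncard)
    (x : X)
    (hball : Tendsto
      (fun n : ℕ => (({y : X | G.dist x y ≤ n}.ncard : ℝ)) ^ (n : ℝ)⁻¹)
      atTop (nhds 1)) :
    lsRoot (srwKernel G) x x = 1 := by
  classical
  obtain ⟨D₀, hD₀⟩ := hbg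
  set μ := srwKernel G with hμdef
  have hrow : ∀ z, ∑' y, μ z y = 1 := fun z => srw_row_sum G z (hD₀ z).1 (hdeg z)
  -- upper bound
  have hub : lsRoot μ x x ≤ 1 := by
    rw [lsRoot]
    refine Filter.limsup_le_of_le (by isBoundedDefault) ?_
    filter_upwards with n
    exact ENNReal.rpow_le_one (matPow_le_one μ hrow n x x) (by positivity)
  -- ball finiteness
  have hfin : ∀ n : ℕ, {y : X | G.dist x y ≤ n}.Finite := by
    by_contra hinf
    push_neg at hinf
    obtain ⟨N, hN⟩ := hinf
    have hN' : {y : X | G.dist x y ≤ N}.Infinite := hN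
    have hev : ∀ᶠ n : ℕ in atTop,
        (({y : X | G.dist x y ≤ n}.ncard : ℝ)) ^ (n : ℝ)⁻¹ = 0 := by
      filter_upwards [eventually_ge_atTop (max N 1)] with m hm
      have hsub : {y : X | G.dist x y ≤ N} ⊆ {y : X | G.dist x y ≤ m} :=
        fun y hy => le_trans hy (le_trans (le_max_left N 1) hm)
      rw [(hN'.mono hsub).ncard, Nat.cast_zero,
        Real.zero_rpow (inv_ne_zero (Nat.cast_ne_zero.mpr (by omega)))]
    have h0 : Tendsto
        (fun n : ℕ => (({y : X | G.dist x y ≤ n}.ncard : ℝ)) ^ (n : ℝ)⁻¹) atTop (nhds 0) :=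
      Filter.Tendsto.congr' (Filter.EventuallyEq.symm hev) tendsto_const_nhds
    exact one_ne_zero (tendsto_nhds_unique hball h0)
  have hD1 : 1 ≤ D₀ := le_trans (hdeg x) (hD₀ x).2
  have hDne : (D₀ : ℝ≥0∞) ≠ 0 := by exact_mod_cast (by omega : D₀ ≠ 0)
  have hxball : ∀ n : ℕ, x ∈ {y : X | G.dist x y ≤ n} := by
    intro n; simp [SimpleGraph.dist_self]
  -- key lower bound
  have key : ∀ n : ℕ,
      ((D₀ : ℝ≥0∞) * (({y : X | G.dist x y ≤ n}.ncard : ℝ≥0∞)) ^ 2)⁻¹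
        ≤ matPow μ (2*n) x x := by
    intro n
    set b := {y : X | G.dist x y ≤ n}.ncard with hbdef
    have hbpos : 0 < b := (Set.ncard_pos (hfin n)).mpr ⟨x, hxball n⟩
    have hbne : (b : ℝ≥0∞) ≠ 0 := by exact_mod_cast hbpos.ne'
    set s := (hfin n).toFinset with hsdef
    have hxs : x ∈ s := (Set.Finite.mem_toFinset _).mpr (hxball n)
    have hcard : s.card = b := (Set.ncard_eq_toFinset_card _ (hfin n)).symm
    have hsum : ∑ y ∈ s, matPow μ n x y = 1 := by
      refine (tsum_eq_sum ?_).symm.trans (matPow_row_sum μ hrow n x)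
      intro y hy
      by_contra h0
      exact hy ((Set.Finite.mem_toFinset _).mpr (matPow_srw_support G hG n x y h0))
    obtain ⟨y, hys, hymax⟩ := Finset.exists_max_image s (matPow μ n x) ⟨x, hxs⟩
    have h1b : 1 ≤ (b : ℝ≥0∞) * matPow μ n x y := by
      calc (1 : ℝ≥0∞) = ∑ z ∈ s, matPow μ n x z := hsum.symm
        _ ≤ s.card • matPow μ n x y := Finset.sum_le_card_nsmul s _ _ hymax
        _ = (b : ℝ≥0∞) * matPow μ n x y := by rw [hcard, nsmul_eq_mul]
    have hy : (b : ℝ≥0∞)⁻¹ ≤ matPow μ n x y := by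
      calc (b : ℝ≥0∞)⁻¹ = (b : ℝ≥0∞)⁻¹ * 1 := (mul_one _).symm
        _ ≤ (b : ℝ≥0∞)⁻¹ * ((b : ℝ≥0∞) * matPow μ n x y) := mul_le_mul_right h1b _
        _ = matPow μ n x y := by
            rw [← mul_assoc, ENNReal.inv_mul_cancel hbne (ENNReal.natCast_ne_top b), one_mul]
    have hrev : (D₀ : ℝ≥0∞)⁻¹ * matPow μ n x y ≤ matPow μ n y x := by
      have hdx : (1 : ℝ≥0∞) ≤ ((G.neighborSet x).ncard : ℝ≥0∞) := by
        exact_mod_cast hdeg x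
      calc (D₀ : ℝ≥0∞)⁻¹ * matPow μ n x y
          ≤ (D₀ : ℝ≥0∞)⁻¹ * (((G.neighborSet x).ncard : ℝ≥0∞) * matPow μ n x y) :=
            mul_le_mul_right (le_mul_of_one_le_left zero_le hdx) _
        _ = (D₀ : ℝ≥0∞)⁻¹ * (((G.neighborSet y).ncard : ℝ≥0∞) * matPow μ n y x) := by
            rw [matPow_rev G hdeg (fun z => (hD₀ z).1) n x y]
        _ ≤ (D₀ : ℝ≥0∞)⁻¹ * ((D₀ : ℝ≥0∞) * matPow μ n y x) := by
            gcongr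
            exact_mod_cast (hD₀ y).2
        _ = matPow μ n y x := by
            rw [← mul_assoc, ENNReal.inv_mul_cancel hDne (ENNReal.natCast_ne_top D₀), one_mul]
    have hsplit : ((D₀ : ℝ≥0∞) * (b : ℝ≥0∞) ^ 2)⁻¹
        = (b : ℝ≥0∞)⁻¹ * ((D₀ : ℝ≥0∞)⁻¹ * (b : ℝ≥0∞)⁻¹) := by
      have h2 : (D₀ : ℝ≥0∞) * (b : ℝ≥0∞) ^ 2 = (b : ℝ≥0∞) * ((D₀ : ℝ≥0∞) * (b : ℝ≥0∞)) := by
        ring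
      rw [h2, ENNReal.mul_inv (Or.inl hbne)
          (Or.inl (ENNReal.natCast_ne_top b)),
        ENNReal.mul_inv (Or.inl hDne) (Or.inl (ENNReal.natCast_ne_top D₀))]
    calc ((D₀ : ℝ≥0∞) * (b : ℝ≥0∞) ^ 2)⁻¹
        = (b : ℝ≥0∞)⁻¹ * ((D₀ : ℝ≥0∞)⁻¹ * (b : ℝ≥0∞)⁻¹) := hsplit
      _ ≤ matPow μ n x y * ((D₀ : ℝ≥0∞)⁻¹ * matPow μ n x y) := by gcongr
      _ ≤ matPow μ n x y * matPow μ n y x := mul_le_mul_right hrev _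
      _ ≤ matPow μ (2*n) x x := by
          rw [two_mul, matPow_add μ n n x x]
          exact ENNReal.le_tsum y
  -- lower bound on limsup
  have hlb : 1 ≤ lsRoot μ x x := by
    have main : ∀ a : ℝ≥0∞, a < 1 → a ≤ lsRoot μ x x := by
      intro a ha
      rcases eq_or_ne a 0 with rfl | ha0
      · exact zero_le
      have hA1 : 1 < a⁻¹ := ENNReal.one_lt_inv.mpr ha
      have hAtop : a⁻¹ ≠ ⊤ := ENNReal.inv_ne_top.mpr ha0
      set A' := (a⁻¹).toReal with hA'def
      have hA'1 : 1 < A' := by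
        have := (ENNReal.toReal_lt_toReal (by simp) hAtop).mpr hA1
        simpa only [ENNReal.toReal_one] using this
      have hD0R : (0 : ℝ) < (D₀ : ℝ) := by exact_mod_cast (by omega : 0 < D₀)
      have hhten : Tendsto
          (fun n : ℕ => ((D₀ : ℝ) * (({y : X | G.dist x y ≤ n}.ncard : ℝ)) ^ 2)
            ^ (((2*n : ℕ) : ℝ))⁻¹) atTop (nhds 1) := by
        have h2n : Tendsto (fun n : ℕ => 2*n) atTop atTop :=
          Filter.tendsto_atTop_mono (fun n => Nat.le_mul_of_pos_left n (by norm_num)) tendsto_id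
        have hDten : Tendsto (fun n : ℕ => (D₀ : ℝ) ^ (((2*n : ℕ) : ℝ))⁻¹) atTop (nhds 1) :=
          (tendsto_rpow_inv_natCast_one hD0R).comp h2n
        have hbten : Tendsto
            (fun n : ℕ => ((({y : X | G.dist x y ≤ n}.ncard : ℝ)) ^ 2)
              ^ (((2*n : ℕ) : ℝ))⁻¹) atTop (nhds 1) := by
          refine hball.congr fun n => ?_
          rw [← Real.rpow_natCast (({y : X | G.dist x y ≤ n}.ncard : ℝ)) 2,
            ← Real.rpow_mul (by positivity)]
          congr 1
          rcases Nat.eq_zero_or_pos n with rfl | hn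
          · norm_num
          · have hn' : ((n : ℝ)) ≠ 0 := Nat.cast_ne_zero.mpr hn.ne'
            push_cast
            field_simp
        have := hDten.mul hbten
        rw [mul_one] at this
        refine this.congr fun n => ?_
        rw [← Real.mul_rpow (by positivity) (by positivity)]
      have hev2 : ∀ᶠ n : ℕ in atTop,
          a ≤ matPow μ (2*n) x x ^ (((2*n : ℕ) : ℝ))⁻¹ := by
        filter_upwards [Filter.Tendsto.eventually_lt_const hA'1 hhten,
          eventually_ge_atTop 1] with n hn hn1
        set b := {y : X | G.dist x y ≤ n}.ncard with hbdef
        have h2nne : ((2*n : ℕ) : ℝ) ≠ 0 := Nat.cast_ne_zero.mpr (by omega)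
        have hreal : (D₀ : ℝ) * (b : ℝ) ^ 2 ≤ A' ^ (2*n) := by
          have hh0 : (0 : ℝ) ≤ ((D₀ : ℝ) * (b : ℝ) ^ 2) ^ (((2*n : ℕ) : ℝ))⁻¹ :=
            Real.rpow_nonneg (by positivity) _
          have hpow := pow_le_pow_left₀ hh0 hn.le (2*n)
          rwa [← Real.rpow_natCast (((D₀ : ℝ) * (b : ℝ) ^ 2) ^ (((2*n : ℕ) : ℝ))⁻¹) (2*n),
            ← Real.rpow_mul (by positivity), inv_mul_cancel₀ h2nne, Real.rpow_one] at hpow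
        have hEN : (D₀ : ℝ≥0∞) * ((b : ℕ) : ℝ≥0∞) ^ 2 ≤ (a⁻¹) ^ (2*n) := by
          refine (ENNReal.toReal_le_toReal ?_ ?_).mp ?_
          · exact ENNReal.mul_ne_top (ENNReal.natCast_ne_top _)
              (ENNReal.pow_ne_top (ENNReal.natCast_ne_top _))
          · exact ENNReal.pow_ne_top hAtop
          · rw [ENNReal.toReal_mul, ENNReal.toReal_pow, ENNReal.toReal_pow,
              ENNReal.toReal_natCast, ENNReal.toReal_natCast]
            exact hreal
        have hstep : a ^ (2*n) ≤ matPow μ (2*n) x x := by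
          have h1 : a ^ (2*n) = ((a⁻¹) ^ (2*n))⁻¹ := by rw [← ENNReal.inv_pow, inv_inv]
          rw [h1]
          exact le_trans (ENNReal.inv_le_inv.mpr hEN) (key n)
        calc a = (a ^ (2*n)) ^ (((2*n : ℕ) : ℝ))⁻¹ := by
              rw [← ENNReal.rpow_natCast a (2*n), ← ENNReal.rpow_mul,
                mul_inv_cancel₀ h2nne, ENNReal.rpow_one]
          _ ≤ matPow μ (2*n) x x ^ (((2*n : ℕ) : ℝ))⁻¹ :=
              ENNReal.rpow_le_rpow hstep (by positivity)
      have hfreq : ∃ᶠ m in atTop, a ≤ matPow μ m x x ^ ((m : ℝ))⁻¹ := by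
        rw [Filter.frequently_atTop]
        intro N
        obtain ⟨n, hn1, hn2⟩ := ((eventually_ge_atTop N).and hev2).exists
        exact ⟨2*n, by omega, hn2⟩
      rw [lsRoot]
      exact Filter.le_limsup_of_frequently_le hfreq
    refine le_of_forall_lt fun c hc => ?_
    obtain ⟨c', hc1, hc2⟩ := exists_between hc
    exact lt_of_lt_of_le hc1 (main c' hc2)
  exact le_antisymm hub hlb
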